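/- The rough boundary algebra 𝔇ⁿ_rough is isomorphic as a ℂ-algebra to the direct sum, over the |G| elements g ∈ G, of full matrix algebras M_{|G|^{n−1}}(ℂ). -/

import Mathlib

set_option linter.unusedSectionVars false

noncomputable section

open scoped BigOperators

/-- The Hilbert space `H_n = ℂ[G]^{⊗ n}`, realized as functions `G^n → ℂ`;
the basis ket `|g₁,…,g_n⟩` is the indicator function of `(g₁,…,g_n)`. -/
abbrev Hn (G : Type) (n : ℕ) : Type := (Fin n → G) → ℂ

variable (G : Type) [Group G] [Fintype G] [DecidableEq G] (n : ℕ)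

/-- Diagonal operator with diagonal entries `c` (in the ket basis). -/
def diagOp (c : (Fin n → G) → ℂ) : Module.End ℂ (Hn G n) where
  toFun f := fun x => c x * f x
  map_add' f g := by funext x; simp only [Pi.add_apply]; ring
  map_smul' r f := by
    funext x
    simp only [Pi.smul_apply, smul_eq_mul, RingHom.id_apply]
    ring

/-- The operator sending the ket `|y⟩` to the ket `|σ y⟩`, where `τ = σ⁻¹`. -/
def permOp (τ : (Fin n → G) → (Fin n → G)) : Module.End ℂ (Hn G n) :=
  LinearMap.funLeft ℂ ℂ τ

/-- `P^h_i`: projection onto kets whose `i`-th label equals `h`. -/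
def Pop (i : Fin n) (h : G) : Module.End ℂ (Hn G n) :=
  diagOp G n fun x => if x i = h then 1 else 0

/-- `Q̃^{(g)}` at sites `i` and `j` (used with `j = i + 1`):
`|…, g_i, g_j, …⟩ ↦ |…, g_i g⁻¹, g g_j, …⟩`. -/
def Qop (i j : Fin n) (g : G) : Module.End ℂ (Hn G n) :=
  permOp G n fun x =>
    Function.update (Function.update x i (x i * g)) j (g⁻¹ * x j)

/-- Generators `P^h_i` and `Q̃^{(g)}_i` of the rough boundary algebra. -/
def roughGens : Set (Module.End ℂ (Hn G n)) :=
  {T | ∃ (i : Fin n) (h : G), T = Pop G n i h} ∪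
  {T | ∃ (i j : Fin n) (g : G), (i : ℕ) + 1 = (j : ℕ) ∧ T = Qop G n i j g}

/-- The rough boundary algebra `𝔇ⁿ_rough`. -/
def DRough : Subalgebra ℂ (Module.End ℂ (Hn G n)) :=
  Algebra.adjoin ℂ (roughGens G n)

namespace RoughProof

variable {G n}

/-- Ordered product of the labels of a ket. -/
def piProd : ∀ {m : ℕ}, (Fin m → G) → G
  | 0, _ => 1
  | _ + 1, x => piProd (Fin.init x) * x (Fin.last _)

lemma piProd_succ {m : ℕ} (x : Fin (m + 1) → G) :
    piProd x = piProd (Fin.init x) * x (Fin.last m) := rfl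

/-- The ket basis vector. -/
def ket (z : Fin n → G) : Hn G n := fun w => if w = z then 1 else 0

lemma ket_expand (f : Hn G n) : f = ∑ z, f z • ket z := by
  funext w
  simp only [Finset.sum_apply, Pi.smul_apply, ket, smul_eq_mul, mul_ite, mul_one, mul_zero]
  rw [Finset.sum_ite_eq Finset.univ w f]
  simp

lemma end_ext {S T : Module.End ℂ (Hn G n)} (h : ∀ z, S (ket z) = T (ket z)) : S = T := by
  apply LinearMap.ext; intro f
  rw [ket_expand f]
  simp only [map_sum, map_smul, h]

lemma apply_eq_sum (T : Module.End ℂ (Hn G n)) (f : Hn G n) (x : Fin n → G) :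
    T f x = ∑ z, f z * T (ket z) x := by
  conv_lhs => rw [ket_expand f]
  simp [map_sum, map_smul, Finset.sum_apply]

/-- The elementary move underlying `Qop`. -/
def qmove {m : ℕ} (i j : Fin m) (g : G) (x : Fin m → G) : Fin m → G :=
  Function.update (Function.update x i (x i * g)) j (g⁻¹ * x j)

lemma qmove_apply_ne {m : ℕ} (i j : Fin m) (g : G) (x : Fin m → G) {w : Fin m}
    (hi : w ≠ i) (hj : w ≠ j) : qmove i j g x w = x w := by
  simp [qmove, Function.update_of_ne hi, Function.update_of_ne hj]

lemma qmove_apply_i {m : ℕ} {i j : Fin m} (hij : i ≠ j) (g : G) (x : Fin m → G) :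
    qmove i j g x i = x i * g := by
  simp [qmove, Function.update_of_ne hij]

lemma qmove_apply_j {m : ℕ} (i j : Fin m) (g : G) (x : Fin m → G) :
    qmove i j g x j = g⁻¹ * x j := by
  simp [qmove]

lemma qmove_qmove {m : ℕ} {i j : Fin m} (hij : i ≠ j) (g : G) (x : Fin m → G) :
    qmove i j g⁻¹ (qmove i j g x) = x := by
  funext w
  rcases eq_or_ne w j with rfl | hj
  · rw [qmove_apply_j, qmove_apply_j]
    group
  rcases eq_or_ne w i with rfl | hi
  · rw [qmove_apply_i hij, qmove_apply_i hij]
    group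
  · rw [qmove_apply_ne _ _ _ _ hi hj, qmove_apply_ne _ _ _ _ hi hj]

lemma Qop_ket {i j : Fin n} (hij : i ≠ j) (g : G) (x : Fin n → G) :
    Qop G n i j g (ket x) = ket (qmove i j g⁻¹ x) := by
  funext w
  show ket x (qmove i j g w) = ket (qmove i j g⁻¹ x) w
  simp only [ket]
  congr 1
  simp only [eq_iff_iff]
  constructor
  · rintro rfl
    rw [qmove_qmove hij]
  · rintro rfl
    conv_rhs => rw [← qmove_qmove hij g⁻¹ x]
    rw [inv_inv]

lemma piProd_qmove : ∀ {m : ℕ} {i j : Fin m} (_ : (i : ℕ) + 1 = (j : ℕ)) (g : G)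
    (x : Fin m → G), piProd (qmove i j g x) = piProd x := by
  intro m
  induction m with
  | zero => intro i j _ _ _; exact absurd i.2 (by omega)
  | succ m ih =>
    intro i j hij g x
    rcases eq_or_ne (j : ℕ) m with hj | hj
    · obtain ⟨k, rfl⟩ : ∃ k, m = k + 1 := ⟨(i : ℕ), by omega⟩
      have hjl : j = Fin.last (k + 1) := Fin.ext hj
      have hil : i = Fin.castSucc (Fin.last k) := Fin.ext (by simp; omega)
      subst hjl; subst hil
      rw [piProd_succ, piProd_succ x]
      have h1 : qmove (Fin.castSucc (Fin.last k)) (Fin.last (k+1)) g x (Fin.last (k+1)) =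
          g⁻¹ * x (Fin.last (k+1)) := qmove_apply_j _ _ _ _
      have h2 : Fin.init (qmove (Fin.castSucc (Fin.last k)) (Fin.last (k+1)) g x) =
          Function.update (Fin.init x) (Fin.last k) (x (Fin.castSucc (Fin.last k)) * g) := by
        show Fin.init (Function.update _ (Fin.last (k+1)) _) = _
        rw [Fin.init_update_last, Fin.init_update_castSucc]
      rw [h1, h2, piProd_succ, Fin.init_update_last, Function.update_self,
        piProd_succ (Fin.init x)]
      have h3 : Fin.init x (Fin.last k) = x (Fin.castSucc (Fin.last k)) := rfl
      rw [h3]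
      group
    · have hjm : (j : ℕ) < m := by omega
      have him : (i : ℕ) < m := by omega
      set i' : Fin m := ⟨i, him⟩ with hi'
      set j' : Fin m := ⟨j, hjm⟩ with hj'
      have hic : i = Fin.castSucc i' := Fin.ext rfl
      have hjc : j = Fin.castSucc j' := Fin.ext rfl
      have hlast_i : Fin.last m ≠ i := by simp [Fin.ext_iff]; omega
      have hlast_j : Fin.last m ≠ j := by simp [Fin.ext_iff]; omega
      rw [piProd_succ, piProd_succ x, qmove_apply_ne _ _ _ _ hlast_i hlast_j]
      congr 1
      have h2 : Fin.init (qmove i j g x) = qmove i' j' g (Fin.init x) := by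
        show Fin.init (Function.update (Function.update x i (x i * g)) j (g⁻¹ * x j)) = _
        rw [hjc, Fin.init_update_castSucc, hic, Fin.init_update_castSucc]
        rfl
      rw [h2, ih (i := i') (j := j') (by simp [hi', hj']; omega) g (Fin.init x)]

lemma eq_of_init_eq {m : ℕ} {x y : Fin (m + 1) → G} (h : Fin.init x = Fin.init y)
    (hp : piProd x = piProd y) : x = y := by
  rw [piProd_succ, piProd_succ, h] at hp
  have hl : x (Fin.last m) = y (Fin.last m) := mul_left_cancel hp
  rw [← Fin.snoc_init_self x, ← Fin.snoc_init_self y, h, hl]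

/-- Connectivity relation: `y` is reachable from `x` by an element of the algebra. -/
def Rrel (x y : Fin n → G) : Prop := ∃ U ∈ DRough G n, U (ket x) = ket y

lemma Rrel_trans {x y z : Fin n → G} (h1 : Rrel x y) (h2 : Rrel y z) : Rrel x z := by
  obtain ⟨U, hU, hUx⟩ := h1
  obtain ⟨V, hV, hVy⟩ := h2
  exact ⟨V * U, mul_mem hV hU, by rw [Module.End.mul_apply, hUx, hVy]⟩

lemma Rrel_qmove {i j : Fin n} (hij : (i : ℕ) + 1 = (j : ℕ)) (g : G) (x : Fin n → G) :
    Rrel x (qmove i j g x) := by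
  have hne : i ≠ j := by intro h; rw [h] at hij; omega
  refine ⟨Qop G n i j g⁻¹, Algebra.subset_adjoin (Or.inr ⟨i, j, g⁻¹, hij, rfl⟩), ?_⟩
  rw [Qop_ket hne, inv_inv]

lemma rrel_of_agree : ∀ (d k : ℕ), k + d = n → ∀ x y : Fin n → G,
    (∀ m : Fin n, (m : ℕ) < k → x m = y m) → piProd x = piProd y → Rrel x y := by
  intro d
  induction d with
  | zero =>
    intro k hk x y hagree _
    have hxy : x = y := funext fun m => hagree m (by omega)
    exact hxy ▸ ⟨1, one_mem _, rfl⟩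
  | succ d ih =>
    intro k hk x y hagree hp
    rcases Nat.eq_zero_or_pos d with rfl | hd
    · subst hk
      have hinit : Fin.init x = Fin.init y := by
        funext m
        exact hagree (Fin.castSucc m) m.2
      have hxy : x = y := eq_of_init_eq hinit hp
      exact hxy ▸ ⟨1, one_mem _, rfl⟩
    · have hk1 : k + 1 < n := by omega
      set i : Fin n := ⟨k, by omega⟩ with hi
      set j : Fin n := ⟨k + 1, hk1⟩ with hj
      have hij : (i : ℕ) + 1 = (j : ℕ) := rfl
      have hne : i ≠ j := by intro h; rw [h] at hij; omega
      set g : G := (x i)⁻¹ * y i with hg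
      refine Rrel_trans (Rrel_qmove hij g x) (ih (k + 1) (by omega) _ y ?_ ?_)
      · intro m hm
        rcases eq_or_ne m i with rfl | hmi
        · rw [qmove_apply_i hne, hg, mul_inv_cancel_left]
        · have hmj : m ≠ j := by
            intro h; rw [h] at hm; simp [hj] at hm
          rw [qmove_apply_ne _ _ _ _ hmi hmj]
          refine hagree m ?_
          have hmk : (m : ℕ) ≠ k := fun h => hmi (Fin.ext h)
          omega
      · rw [piProd_qmove hij, hp]

lemma rrel_of_piProd_eq {x y : Fin n → G} (h : piProd x = piProd y) : Rrel x y :=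
  rrel_of_agree n 0 (by omega) x y (fun m hm => absurd hm (by omega)) h

lemma diagOp_apply (c : (Fin n → G) → ℂ) (f : Hn G n) (x : Fin n → G) :
    diagOp G n c f x = c x * f x := rfl

lemma diagOp_mul (c d : (Fin n → G) → ℂ) :
    diagOp G n c * diagOp G n d = diagOp G n (c * d) := by
  apply LinearMap.ext; intro f; funext x
  simp [Module.End.mul_apply, diagOp_apply, mul_assoc]

lemma diagOp_one : diagOp G n 1 = 1 := by
  apply LinearMap.ext; intro f; funext x
  simp [diagOp_apply]

lemma pket_mem (x : Fin n → G) :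
    diagOp G n (fun z => if z = x then 1 else 0) ∈ DRough G n := by
  have key : ∀ s : Finset (Fin n),
      diagOp G n (fun z => if ∀ i ∈ s, z i = x i then (1 : ℂ) else 0) ∈ DRough G n := by
    intro s
    induction s using Finset.induction_on with
    | empty =>
      have h1 : (fun z : Fin n → G =>
          if ∀ i ∈ (∅ : Finset (Fin n)), z i = x i then (1 : ℂ) else 0) = 1 := by
        funext z; simp
      rw [h1, diagOp_one]
      exact one_mem _
    | @insert a s _ ih =>
      have hP : Pop G n a (x a) ∈ DRough G n :=
        Algebra.subset_adjoin (Or.inl ⟨a, x a, rfl⟩)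
      have hmul := mul_mem hP ih
      rw [Pop, diagOp_mul] at hmul
      convert hmul using 2
      funext z
      simp only [Pi.mul_apply, Finset.forall_mem_insert]
      by_cases h1 : z a = x a <;> by_cases h2 : ∀ i ∈ s, z i = x i <;> simp [h1, h2]
  have hu := key Finset.univ
  convert hu using 2
  funext z
  simp [funext_iff]

lemma exists_unit {x y : Fin n → G} (h : piProd x = piProd y) :
    ∃ E ∈ DRough G n, ∀ z, E (ket z) = if z = x then ket y else 0 := by
  obtain ⟨U, hU, hUx⟩ := rrel_of_piProd_eq h
  refine ⟨U * diagOp G n (fun z => if z = x then 1 else 0),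
    mul_mem hU (pket_mem x), fun z => ?_⟩
  rw [Module.End.mul_apply]
  by_cases hz : z = x
  · subst hz
    have hd : diagOp G n (fun w => if w = z then (1 : ℂ) else 0) (ket z) = ket z := by
      funext w
      rw [diagOp_apply]
      simp only [ket]
      by_cases hw : w = z <;> simp [hw]
    rw [hd, hUx, if_pos rfl]
  · have hd : diagOp G n (fun w => if w = x then (1 : ℂ) else 0) (ket z) = 0 := by
      funext w
      rw [diagOp_apply]
      simp only [ket]
      by_cases hw : w = x
      · subst hw; simp [Ne.symm hz]
      · simp [hw]
    rw [hd, map_zero, if_neg hz]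

variable (G n) in
/-- The algebra of block-diagonal operators with respect to the total-product sectors. -/
def sectorAlg : Subalgebra ℂ (Module.End ℂ (Hn G n)) where
  carrier := {T | ∀ x y : Fin n → G, piProd x ≠ piProd y → T (ket y) x = 0}
  mul_mem' := by
    intro S T hS hT x y hxy
    rw [Module.End.mul_apply, apply_eq_sum]
    refine Finset.sum_eq_zero fun z _ => ?_
    by_cases hz : piProd z = piProd y
    · rw [hS x z (fun hh => hxy (hh.trans hz)), mul_zero]
    · rw [hT z y hz, zero_mul]
  add_mem' := by
    intro S T hS hT x y hxy
    rw [LinearMap.add_apply, Pi.add_apply, hS x y hxy, hT x y hxy, add_zero]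
  algebraMap_mem' := by
    intro c x y hxy
    have hxyne : x ≠ y := fun h => hxy (h ▸ rfl)
    rw [Module.algebraMap_end_apply, Pi.smul_apply]
    simp [ket, hxyne]

lemma mem_sectorAlg_iff {T : Module.End ℂ (Hn G n)} :
    T ∈ sectorAlg G n ↔ ∀ x y : Fin n → G, piProd x ≠ piProd y → T (ket y) x = 0 := Iff.rfl

lemma drough_le_sector : DRough G n ≤ sectorAlg G n := by
  apply Algebra.adjoin_le
  rintro T (⟨i, h, rfl⟩ | ⟨i, j, g, hij, rfl⟩)
  · intro x y hxy
    have hxyne : x ≠ y := fun h' => hxy (h' ▸ rfl)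
    rw [Pop, diagOp_apply]
    simp [ket, hxyne]
  · intro x y hxy
    show ket y (qmove i j g x) = 0
    simp only [ket]
    rw [if_neg]
    intro hq
    exact hxy (by rw [← hq, piProd_qmove hij])

/-- Matrix-unit-like elements. -/
def Exy (x y : Fin n → G) : Module.End ℂ (Hn G n) :=
  if h : piProd x = piProd y then Classical.choose (exists_unit h) else 0

lemma Exy_mem (x y : Fin n → G) : Exy x y ∈ DRough G n := by
  rw [Exy]
  split_ifs with h
  · exact (Classical.choose_spec (exists_unit h)).1
  · exact zero_mem _

lemma Exy_ket (x y z : Fin n → G) :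
    Exy x y (ket z) = if piProd x = piProd y ∧ z = x then ket y else 0 := by
  rw [Exy]
  by_cases h : piProd x = piProd y
  · rw [dif_pos h, (Classical.choose_spec (exists_unit h)).2 z]
    by_cases h2 : z = x
    · rw [if_pos h2, if_pos ⟨h, h2⟩]
    · rw [if_neg h2, if_neg (fun hh => h2 hh.2)]
  · rw [dif_neg h, if_neg (fun hh => h hh.1)]
    simp

lemma sector_le_drough : sectorAlg G n ≤ DRough G n := by
  intro T hT
  have hTmem : ∀ x y : Fin n → G, piProd x ≠ piProd y → T (ket y) x = 0 := hT
  have key : T = ∑ x : Fin n → G, ∑ y : Fin n → G, (T (ket x) y) • Exy x y := by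
    apply end_ext
    intro z
    simp only [LinearMap.sum_apply, LinearMap.smul_apply, Exy_ket]
    rw [Finset.sum_eq_single z]
    · have hterm : ∀ y : Fin n → G,
          (T (ket z) y) • (if piProd z = piProd y ∧ z = z then ket y else 0)
          = (T (ket z) y) • ket y := by
        intro y
        by_cases h : piProd z = piProd y
        · rw [if_pos ⟨h, rfl⟩]
        · rw [hTmem y z (Ne.symm h)]
          simp
      rw [Finset.sum_congr rfl fun y _ => hterm y, ← ket_expand]
    · intro x _ hx
      refine Finset.sum_eq_zero fun y _ => ?_
      rw [if_neg (fun hh => hx hh.2.symm), smul_zero]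
    · intro h
      exact absurd (Finset.mem_univ z) h
  rw [key]
  exact Subalgebra.sum_mem _ fun x _ => Subalgebra.sum_mem _ fun y _ =>
    Subalgebra.smul_mem _ (Exy_mem x y) _

lemma drough_eq_sector : DRough G n = sectorAlg G n :=
  le_antisymm drough_le_sector sector_le_drough

variable (G n) in
/-- The block-decomposition algebra homomorphism. -/
def Φ : sectorAlg G n →ₐ[ℂ]
    ((c : G) → Matrix {x : Fin n → G // piProd x = c} {x : Fin n → G // piProd x = c} ℂ) where
  toFun T := fun _ x y => T.1 (ket y.1) x.1
  map_one' := by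
    funext c x y
    show ket y.1 x.1 = (1 : Matrix _ _ ℂ) x y
    rw [Matrix.one_apply]
    simp [ket, Subtype.ext_iff]
  map_mul' := by
    intro S T
    funext c x y
    show (↑(S * T) : Module.End ℂ (Hn G n)) (ket y.1) x.1 = _
    rw [MulMemClass.coe_mul, Module.End.mul_apply, apply_eq_sum]
    show _ = ∑ z : {x : Fin n → G // piProd x = c}, S.1 (ket z.1) x.1 * T.1 (ket y.1) z.1
    rw [← Finset.sum_filter_of_ne (p := fun z => piProd z = c)
      (fun z _ hz => by
        by_contra hc
        exact hz (by rw [(mem_sectorAlg_iff.1 T.2) z y.1 (by rw [y.2]; exact hc), zero_mul]))]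
    rw [Finset.sum_subtype (p := fun z => piProd z = c)
        (Finset.univ.filter fun z => piProd z = c) (by simp)
        (fun z => T.1 (ket y.1) z * S.1 (ket z) x.1)]
    exact Finset.sum_congr rfl fun z _ => mul_comm _ _
  map_zero' := by
    funext c x y
    show (↑(0 : sectorAlg G n) : Module.End ℂ (Hn G n)) (ket y.1) x.1 = _
    simp
  map_add' := by
    intro S T
    funext c x y
    show (↑(S + T) : Module.End ℂ (Hn G n)) (ket y.1) x.1 = _
    simp
    rfl
  commutes' := by
    intro r
    funext c x y
    show ((algebraMap ℂ (sectorAlg G n) r : sectorAlg G n) : Module.End ℂ (Hn G n))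
        (ket y.1) x.1 = _
    rw [Algebra.algebraMap_eq_smul_one, SetLike.val_smul, OneMemClass.coe_one,
      LinearMap.smul_apply, Module.End.one_apply, Pi.smul_apply, smul_eq_mul]
    rw [Pi.algebraMap_apply, Matrix.algebraMap_matrix_apply]
    by_cases h : x = y
    · subst h; simp [ket]
    · have hne : x.1 ≠ y.1 := fun hh => h (Subtype.ext hh)
      simp [ket, hne, h]

lemma Φ_injective : Function.Injective (Φ G n) := by
  refine (injective_iff_map_eq_zero _).2 fun T hT0 => ?_
  have hz : ∀ z, T.1 (ket z) = 0 := by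
    intro z
    funext w
    by_cases h : piProd w = piProd z
    · have hc := congrFun (congrFun (congrFun hT0 (piProd z)) ⟨w, h⟩) ⟨z, rfl⟩
      exact hc
    · exact (mem_sectorAlg_iff.1 T.2) w z h
  refine Subtype.ext (end_ext fun z => ?_)
  rw [hz z]
  simp

def Ψfun (M : (c : G) → Matrix {x : Fin n → G // piProd x = c} {x : Fin n → G // piProd x = c} ℂ) :
    Module.End ℂ (Hn G n) where
  toFun f := fun x => ∑ z : {z : Fin n → G // piProd z = piProd x},
    M (piProd x) ⟨x, rfl⟩ z * f z.1
  map_add' f g := by funext x; simp [mul_add, Finset.sum_add_distrib]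
  map_smul' r f := by
    funext x
    simp only [Pi.smul_apply, smul_eq_mul, RingHom.id_apply]
    rw [Finset.mul_sum]
    exact Finset.sum_congr rfl fun z _ => by ring

lemma Ψfun_ket
    (M : (c : G) → Matrix {x : Fin n → G // piProd x = c} {x : Fin n → G // piProd x = c} ℂ)
    (y x : Fin n → G) :
    Ψfun M (ket y) x = if h : piProd y = piProd x then M (piProd x) ⟨x, rfl⟩ ⟨y, h⟩ else 0 := by
  show (∑ z : {z : Fin n → G // piProd z = piProd x},
    M (piProd x) ⟨x, rfl⟩ z * ket y z.1) = _
  split_ifs with h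
  · rw [Finset.sum_eq_single (⟨y, h⟩ : {z : Fin n → G // piProd z = piProd x})]
    · simp [ket]
    · intro b _ hb
      have hb' : b.1 ≠ y := fun hh => hb (Subtype.ext hh)
      simp [ket, hb']
    · intro hmem; exact absurd (Finset.mem_univ _) hmem
  · refine Finset.sum_eq_zero fun z _ => ?_
    have hzz : z.1 ≠ y := fun hh => h (hh ▸ z.2)
    simp [ket, hzz]

lemma Ψfun_mem
    (M : (c : G) → Matrix {x : Fin n → G // piProd x = c} {x : Fin n → G // piProd x = c} ℂ) :
    Ψfun M ∈ sectorAlg G n := by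
  intro x y hxy
  rw [Ψfun_ket, dif_neg (fun h => hxy h.symm)]

lemma Φ_surjective : Function.Surjective (Φ G n) := by
  intro M
  refine ⟨⟨Ψfun M, Ψfun_mem M⟩, ?_⟩
  funext c x y
  show Ψfun M (ket y.1) x.1 = M c x y
  obtain ⟨x, rfl⟩ := x
  rw [Ψfun_ket, dif_pos y.2]

variable (G n) in
/-- The block decomposition of the sector algebra. -/
def sectorEquiv : sectorAlg G n ≃ₐ[ℂ]
    ((c : G) → Matrix {x : Fin n → G // piProd x = c} {x : Fin n → G // piProd x = c} ℂ) :=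
  AlgEquiv.ofBijective (Φ G n) ⟨Φ_injective, Φ_surjective⟩

/-- Each sector is parametrized by the first `m` labels. -/
def fiberEquiv {m : ℕ} (c : G) : {x : Fin (m + 1) → G // piProd x = c} ≃ (Fin m → G) where
  toFun x := Fin.init x.1
  invFun y := ⟨Fin.snoc y ((piProd y)⁻¹ * c), by
    rw [piProd_succ, Fin.init_snoc, Fin.snoc_last, mul_inv_cancel_left]⟩
  left_inv := by
    rintro ⟨x, rfl⟩
    apply Subtype.ext
    show Fin.snoc (Fin.init x) ((piProd (Fin.init x))⁻¹ * piProd x) = x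
    rw [piProd_succ, inv_mul_cancel_left, Fin.snoc_init_self]
  right_inv y := Fin.init_snoc _ _

end RoughProof

/-- `𝔇ⁿ_rough` is isomorphic as a ℂ-algebra to the direct sum over the
`|G|` elements `g ∈ G` of full matrix algebras `M_{|G|^(n-1)}(ℂ)`. -/
theorem stmt3 (hn : 1 ≤ n) :
    Nonempty (↥(DRough G n) ≃ₐ[ℂ]
      (G → Matrix (Fin (Fintype.card G ^ (n - 1))) (Fin (Fintype.card G ^ (n - 1))) ℂ)) := by
  obtain ⟨m, rfl⟩ : ∃ m, n = m + 1 := ⟨n - 1, by omega⟩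
  have hcard : ∀ c : G, Fintype.card {x : Fin (m + 1) → G // RoughProof.piProd x = c}
      = Fintype.card G ^ (m + 1 - 1) := by
    intro c
    rw [Fintype.card_congr (RoughProof.fiberEquiv c)]
    simp [Fintype.card_fun]
  exact ⟨(Subalgebra.equivOfEq _ _ RoughProof.drough_eq_sector).trans
    ((RoughProof.sectorEquiv G (m + 1)).trans
      (AlgEquiv.piCongrRight fun c =>
        Matrix.reindexAlgEquiv ℂ ℂ (Fintype.equivFinOfCardEq (hcard c))))⟩
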